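/- Let f : X → ℝ be locally Lipschitz near x̄ with Lipschitz constant M on a neighborhood of x̄, and suppose that for some w ∈ X and sequences t_n ↓ 0 one can find x_n* ∈ ∂^C f(x̄ + τ_n t_n w) (Clarke subdifferential, τ_n ∈ [0,1]) with f(x̄) - f(x̄ + t_n w) ≤ -t_n ⟨x_n*, w⟩ (Lebourg mean value inequality). Then every weak* cluster point x* of (x_n*) belongs to ∂^C f(x̄) and satisfies f(x̄) - f(x̄ + t_n w) ≤ -t_n⟨x*, w⟩ + o(t_n) along a subsequence. In particular (Lebourg's mean value theorem, finite-dimensional case): for f : ℝ^n → ℝ locally Lipschitz and points a, b, there exist τ ∈ (0,1) and x* ∈ ∂^C f(a + τ(b-a)) with f(b) - f(a) = ⟨x*, b - a⟩. -/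

import Mathlib

open Filter
open scoped NNReal

/-- Clarke's generalized directional derivative
`f°(x; h) = limsup_{y → x, t ↓ 0} (f(y + t h) - f(y))/t`. -/
noncomputable def clarkeDeriv {X : Type*} [NormedAddCommGroup X]
    [NormedSpace ℝ X] (f : X → ℝ) (x : X) (h : X) : ℝ :=
  Filter.limsup (fun p : X × ℝ => (f (p.1 + p.2 • h) - f p.1) / p.2)
    ((nhds x) ×ˢ (nhdsWithin (0 : ℝ) (Set.Ioi 0)))

/-- Clarke's subdifferential of a locally Lipschitz function:
`∂^C f(x) = {x* | ⟨x*, h⟩ ≤ f°(x; h) for all h}`. -/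
def clarkeSubdiff {X : Type*} [NormedAddCommGroup X] [NormedSpace ℝ X]
    (f : X → ℝ) (x : X) : Set (X →L[ℝ] ℝ) :=
  {p | ∀ h, p h ≤ clarkeDeriv f x h}

namespace Lebourg

variable {X : Type*} [NormedAddCommGroup X] [NormedSpace ℝ X]

/-- The filter in the definition of the Clarke derivative. -/
noncomputable def LL (x₀ : X) : Filter (X × ℝ) := (nhds x₀) ×ˢ (nhdsWithin (0 : ℝ) (Set.Ioi 0))

/-- The difference quotient. -/
noncomputable def Q (f : X → ℝ) (v : X) (p : X × ℝ) : ℝ := (f (p.1 + p.2 • v) - f p.1) / p.2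

lemma clarkeDeriv_eq (f : X → ℝ) (x₀ v : X) :
    clarkeDeriv f x₀ v = limsup (Q f v) (LL x₀) := rfl

instance (x₀ : X) : (LL x₀).NeBot := by
  have : (nhdsWithin (0 : ℝ) (Set.Ioi 0)).NeBot := nhdsGT_neBot 0
  exact Filter.prod_neBot.2 ⟨inferInstance, this⟩

variable {f : X → ℝ} {x₀ : X} {K : ℝ≥0} {ε : ℝ}

lemma ev_bound (hε : 0 < ε) (hLip : LipschitzOnWith K f (Metric.ball x₀ ε)) (v : X) :
    ∀ᶠ p in LL x₀, |Q f v p| ≤ K * ‖v‖ := by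
  have hδ : 0 < ε / 2 / (‖v‖ + 1) := by positivity
  have h1 : Metric.ball x₀ (ε / 2) ∈ nhds x₀ := Metric.ball_mem_nhds _ (by linarith)
  have h2 : Set.Ioo (0 : ℝ) (ε / 2 / (‖v‖ + 1)) ∈ nhdsWithin (0 : ℝ) (Set.Ioi 0) :=
    Ioo_mem_nhdsGT_of_mem ⟨le_refl _, hδ⟩
  filter_upwards [Filter.prod_mem_prod h1 h2] with p hp
  obtain ⟨hy, ht0, htδ⟩ : p.1 ∈ Metric.ball x₀ (ε / 2) ∧ 0 < p.2 ∧ p.2 < ε / 2 / (‖v‖ + 1) :=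
    ⟨hp.1, hp.2.1, hp.2.2⟩
  have htv : p.2 * ‖v‖ < ε / 2 := by
    calc p.2 * ‖v‖ ≤ p.2 * (‖v‖ + 1) := by nlinarith [norm_nonneg v]
      _ < ε / 2 / (‖v‖ + 1) * (‖v‖ + 1) := by
          apply mul_lt_mul_of_pos_right htδ; positivity
      _ = ε / 2 := div_mul_cancel₀ _ (by positivity)
  have hmem1 : p.1 + p.2 • v ∈ Metric.ball x₀ ε := by
    rw [Metric.mem_ball] at hy ⊢
    calc dist (p.1 + p.2 • v) x₀ ≤ dist (p.1 + p.2 • v) p.1 + dist p.1 x₀ := dist_triangle _ _ _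
      _ = ‖p.2 • v‖ + dist p.1 x₀ := by rw [dist_eq_norm, add_sub_cancel_left]
      _ < ε / 2 + ε / 2 := by
          rw [norm_smul, Real.norm_eq_abs, abs_of_pos ht0]
          exact add_lt_add htv hy
      _ = ε := by ring
  have hmem2 : p.1 ∈ Metric.ball x₀ ε := Metric.ball_subset_ball (by linarith) hy
  have hd := hLip.dist_le_mul _ hmem1 _ hmem2
  rw [Real.dist_eq] at hd
  have : dist (p.1 + p.2 • v) p.1 = p.2 * ‖v‖ := by
    rw [dist_eq_norm, add_sub_cancel_left, norm_smul, Real.norm_eq_abs, abs_of_pos ht0]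
  rw [this] at hd
  have : |Q f v p| = |f (p.1 + p.2 • v) - f p.1| / p.2 := by
    rw [Q, abs_div, abs_of_pos ht0]
  rw [this]
  rw [div_le_iff₀ ht0]
  calc |f (p.1 + p.2 • v) - f p.1| ≤ K * (p.2 * ‖v‖) := hd
    _ = K * ‖v‖ * p.2 := by ring

lemma bdd_le (hε : 0 < ε) (hLip : LipschitzOnWith K f (Metric.ball x₀ ε)) (v : X) :
    IsBoundedUnder (· ≤ ·) (LL x₀) (Q f v) :=
  isBoundedUnder_of_eventually_le (a := (K * ‖v‖ : ℝ))
    (by filter_upwards [ev_bound hε hLip v] with p hp using (abs_le.1 hp).2)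

lemma bdd_ge (hε : 0 < ε) (hLip : LipschitzOnWith K f (Metric.ball x₀ ε)) (v : X) :
    IsBoundedUnder (· ≥ ·) (LL x₀) (Q f v) :=
  isBoundedUnder_of_eventually_ge (a := (-(K * ‖v‖) : ℝ))
    (by filter_upwards [ev_bound hε hLip v] with p hp using (abs_le.1 hp).1)

lemma freq_le_clarke (hε : 0 < ε) (hLip : LipschitzOnWith K f (Metric.ball x₀ ε)) {v : X} {c : ℝ}
    (hfreq : ∃ᶠ p in LL x₀, c ≤ Q f v p) : c ≤ clarkeDeriv f x₀ v :=
  le_limsup_of_frequently_le hfreq (bdd_le hε hLip v)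

lemma limsup_comp_le (hε : 0 < ε) (hLip : LipschitzOnWith K f (Metric.ball x₀ ε))
    {m : X × ℝ → X × ℝ} (hm : Tendsto m (LL x₀) (LL x₀)) (v : X) :
    limsup (fun p => Q f v (m p)) (LL x₀) ≤ clarkeDeriv f x₀ v := by
  have heq : limsup (fun p => Q f v (m p)) (LL x₀) = limsup (Q f v) (map m (LL x₀)) := by
    simp [Filter.limsup, Filter.map_map]; rfl
  rw [heq, clarkeDeriv_eq]
  refine limsup_le_limsup_of_le hm ?_ (bdd_le hε hLip v)
  have : IsBoundedUnder (· ≥ ·) (map m (LL x₀)) (Q f v) := by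
    refine isBoundedUnder_of_eventually_ge (a := (-(K * ‖v‖) : ℝ)) ?_
    rw [Filter.eventually_map]
    filter_upwards [hm.eventually (ev_bound hε hLip v)] with p hp using (abs_le.1 hp).1
  exact this.isCoboundedUnder_le


lemma clarke_zero : clarkeDeriv f x₀ (0 : X) = 0 := by
  have : Q f (0 : X) = fun _ => (0 : ℝ) := by
    funext p; simp [Q]
  rw [clarkeDeriv_eq, this, limsup_const]

lemma tendsto_shift (hε : 0 < ε) (v : X) :
    Tendsto (fun p : X × ℝ => (p.1 + p.2 • v, p.2)) (LL x₀) (LL x₀) := by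
  refine Tendsto.prodMk ?_ (tendsto_snd (f := nhds x₀))
  have h1 : Tendsto (fun p : X × ℝ => p.1) (LL x₀) (nhds x₀) := tendsto_fst
  have h2 : Tendsto (fun p : X × ℝ => p.2) (LL x₀) (nhds 0) :=
    (tendsto_snd (f := nhds x₀)).mono_right nhdsWithin_le_nhds
  have := h1.add ((h2.smul_const v))
  simpa using this

lemma clarke_add (hε : 0 < ε) (hLip : LipschitzOnWith K f (Metric.ball x₀ ε)) (u v : X) :
    clarkeDeriv f x₀ (u + v) ≤ clarkeDeriv f x₀ u + clarkeDeriv f x₀ v := by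
  set m : X × ℝ → X × ℝ := fun p => (p.1 + p.2 • v, p.2) with hm_def
  have hm : Tendsto m (LL x₀) (LL x₀) := tendsto_shift hε v
  have key : Q f (u + v) = (fun p => Q f u (m p)) + Q f v := by
    funext p
    have harg : p.1 + p.2 • (u + v) = p.1 + p.2 • v + p.2 • u := by
      rw [smul_add]; abel
    simp only [Q, Pi.add_apply, hm_def, harg, ← add_div]
    ring_nf
  have hb1 : IsBoundedUnder (· ≥ ·) (LL x₀) (fun p => Q f u (m p)) :=
    isBoundedUnder_of_eventually_ge (a := (-(K * ‖u‖) : ℝ))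
      (by filter_upwards [hm.eventually (ev_bound hε hLip u)] with p hp using (abs_le.1 hp).1)
  have hb2 : IsBoundedUnder (· ≤ ·) (LL x₀) (fun p => Q f u (m p)) :=
    isBoundedUnder_of_eventually_le (a := ((K * ‖u‖) : ℝ))
      (by filter_upwards [hm.eventually (ev_bound hε hLip u)] with p hp using (abs_le.1 hp).2)
  have hb3 := (bdd_ge hε hLip v).isCoboundedUnder_le
  have hb4 := bdd_le hε hLip v
  calc clarkeDeriv f x₀ (u + v)
      = limsup ((fun p => Q f u (m p)) + Q f v) (LL x₀) := by rw [clarkeDeriv_eq, key]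
    _ ≤ limsup (fun p => Q f u (m p)) (LL x₀) + limsup (Q f v) (LL x₀) :=
        limsup_add_le hb1 hb2 hb3 hb4
    _ ≤ clarkeDeriv f x₀ u + clarkeDeriv f x₀ v := by
        rw [← clarkeDeriv_eq]
        exact add_le_add_left (limsup_comp_le hε hLip hm u) _

lemma tendsto_scale {c : ℝ} (hc : 0 < c) :
    Tendsto (fun p : X × ℝ => (p.1, c * p.2)) (LL x₀) (LL x₀) := by
  refine Tendsto.prodMk (tendsto_fst (g := nhdsWithin (0:ℝ) (Set.Ioi 0))) ?_
  have h2 : Tendsto (fun p : X × ℝ => p.2) (LL x₀)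
      (nhdsWithin (0 : ℝ) (Set.Ioi 0)) := tendsto_snd (f := nhds x₀)
  have hmul : Tendsto (fun t : ℝ => c * t) (nhdsWithin (0 : ℝ) (Set.Ioi 0))
      (nhdsWithin (0 : ℝ) (Set.Ioi 0)) := by
    apply Tendsto.inf
    · simpa using (tendsto_id (x := nhds (0:ℝ))).const_mul c
    · rw [tendsto_principal_principal]
      intro t ht
      exact mul_pos hc ht
  exact hmul.comp h2

lemma clarke_smul_le (hε : 0 < ε) (hLip : LipschitzOnWith K f (Metric.ball x₀ ε))
    {c : ℝ} (hc : 0 < c) (v : X) :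
    clarkeDeriv f x₀ (c • v) ≤ c * clarkeDeriv f x₀ v := by
  set σ : X × ℝ → X × ℝ := fun p => (p.1, c * p.2) with hσ_def
  have hσ : Tendsto σ (LL x₀) (LL x₀) := tendsto_scale hc
  have key : Q f (c • v) = fun p => c * Q f v (σ p) := by
    funext p
    simp only [Q, hσ_def]
    have harg : (c * p.2) • v = p.2 • (c • v) := by rw [mul_comm, mul_smul]
    rw [harg]
    rcases eq_or_ne p.2 0 with h | h
    · simp [h]
    · field_simp
  have hb1 : IsBoundedUnder (· ≤ ·) (LL x₀) (fun p => Q f v (σ p)) :=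
    isBoundedUnder_of_eventually_le (a := ((K * ‖v‖) : ℝ))
      (by filter_upwards [hσ.eventually (ev_bound hε hLip v)] with p hp using (abs_le.1 hp).2)
  have hb1' : IsBoundedUnder (· ≥ ·) (LL x₀) (fun p => Q f v (σ p)) :=
    isBoundedUnder_of_eventually_ge (a := (-(K * ‖v‖) : ℝ))
      (by filter_upwards [hσ.eventually (ev_bound hε hLip v)] with p hp using (abs_le.1 hp).1)
  have hb2 : IsBoundedUnder (· ≤ ·) (LL x₀) (fun p => c * Q f v (σ p)) :=
    isBoundedUnder_of_eventually_le (a := (c * (K * ‖v‖) : ℝ))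
      (by filter_upwards [hσ.eventually (ev_bound hε hLip v)] with p hp using
        mul_le_mul_of_nonneg_left (abs_le.1 hp).2 hc.le)
  have hb2' : IsBoundedUnder (· ≥ ·) (LL x₀) (fun p => c * Q f v (σ p)) :=
    isBoundedUnder_of_eventually_ge (a := (c * (-(K * ‖v‖)) : ℝ))
      (by filter_upwards [hσ.eventually (ev_bound hε hLip v)] with p hp using
        mul_le_mul_of_nonneg_left (abs_le.1 hp).1 hc.le)
  have hiso := (OrderIso.mulLeft₀ c hc).limsup_apply (f := LL x₀)
    (u := fun p => Q f v (σ p)) hb1 hb1'.isCoboundedUnder_le hb2 hb2'.isCoboundedUnder_le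
  simp only [OrderIso.mulLeft₀_apply] at hiso
  rw [clarkeDeriv_eq, key, ← hiso]
  exact mul_le_mul_of_nonneg_left (limsup_comp_le hε hLip hσ v) hc.le

lemma clarke_smul (hε : 0 < ε) (hLip : LipschitzOnWith K f (Metric.ball x₀ ε))
    {c : ℝ} (hc : 0 < c) (v : X) :
    clarkeDeriv f x₀ (c • v) = c * clarkeDeriv f x₀ v := by
  refine le_antisymm (clarke_smul_le hε hLip hc v) ?_
  have h2 := clarke_smul_le hε hLip (inv_pos.2 hc) (c • v)
  rw [inv_smul_smul₀ hc.ne'] at h2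
  calc c * clarkeDeriv f x₀ v ≤ c * (c⁻¹ * clarkeDeriv f x₀ (c • v)) :=
        mul_le_mul_of_nonneg_left h2 hc.le
    _ = clarkeDeriv f x₀ (c • v) := by field_simp

end Lebourg


open Lebourg

/-- Lebourg's mean value theorem, finite-dimensional case: for
`f : ℝⁿ → ℝ` locally Lipschitz and points `a, b`, there exist `τ ∈ (0, 1)` and
`x* ∈ ∂^C f(a + τ (b - a))` with `f b - f a = ⟨x*, b - a⟩`. -/
theorem lebourg_mean_value
    {n : ℕ} (f : EuclideanSpace ℝ (Fin n) → ℝ)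
    (hf : LocallyLipschitz f) (a b : EuclideanSpace ℝ (Fin n)) :
    ∃ τ ∈ Set.Ioo (0 : ℝ) 1, ∃ p ∈ clarkeSubdiff f (a + τ • (b - a)),
      f b - f a = p (b - a) := by
  set h : EuclideanSpace ℝ (Fin n) := b - a with hh
  set s : ℝ := f b - f a with hs
  set g₀ : ℝ → ℝ := fun t => f (a + t • h) - t * s with hg₀
  have hcont : ContinuousOn g₀ (Set.Icc 0 1) := by
    apply Continuous.continuousOn
    exact (hf.continuous.comp (by continuity)).sub (by continuity)
  have hval : g₀ 0 = g₀ 1 := by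
    have h1 : a + (1 : ℝ) • h = b := by rw [one_smul, hh]; abel
    simp only [hg₀, zero_smul, add_zero, zero_mul, sub_zero, one_mul, h1, hs]
    ring
  obtain ⟨τ, hτ, hext⟩ := exists_isLocalExtr_Ioo zero_lt_one hcont hval
  set x₀ : EuclideanSpace ℝ (Fin n) := a + τ • h with hx₀
  obtain ⟨K, t, htmem, hK⟩ := hf x₀
  obtain ⟨ε, hε, hball⟩ := Metric.mem_nhds_iff.1 htmem
  have hLip : LipschitzOnWith K f (Metric.ball x₀ ε) := hK.mono hball
  have key : ∀ u : ℝ, u * s ≤ clarkeDeriv f x₀ (u • h) := by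
    intro u
    rcases hext with hmin | hmax
    · have hT : Tendsto (fun t : ℝ => τ + t * u) (nhdsWithin 0 (Set.Ioi 0)) (nhds τ) := by
        have : Tendsto (fun t : ℝ => τ + t * u) (nhds 0) (nhds (τ + 0 * u)) :=
          (continuous_const.add (continuous_id.mul continuous_const)).tendsto 0
        simpa using this.mono_left nhdsWithin_le_nhds
      have hev : ∀ᶠ t in nhdsWithin (0:ℝ) (Set.Ioi 0), g₀ τ ≤ g₀ (τ + t * u) :=
        hT.eventually hmin
      have hmap : Tendsto (fun t : ℝ => ((x₀, t) : EuclideanSpace ℝ (Fin n) × ℝ))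
          (nhdsWithin 0 (Set.Ioi 0)) (LL x₀) :=
        Tendsto.prodMk tendsto_const_nhds tendsto_id
      refine freq_le_clarke hε hLip (hmap.frequently (Filter.Eventually.frequently ?_))
      filter_upwards [hev, self_mem_nhdsWithin] with t ht htpos
      have htpos' : (0:ℝ) < t := htpos
      have harg : x₀ + t • (u • h) = a + (τ + t * u) • h := by
        rw [hx₀, smul_smul, add_smul]; abel
      have hnum : t * (u * s) ≤ f (x₀ + t • (u • h)) - f x₀ := by
        have hdiff : g₀ (τ + t * u) - g₀ τ = f (x₀ + t • (u • h)) - f x₀ - t * (u * s) := by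
          rw [harg]; simp only [hg₀, hx₀]
          ring
        nlinarith [ht]
      rw [Q]
      simp only
      rw [le_div_iff₀ htpos']
      linarith [hnum]
    · have hT : Tendsto (fun t : ℝ => τ - t * u) (nhdsWithin 0 (Set.Ioi 0)) (nhds τ) := by
        have : Tendsto (fun t : ℝ => τ - t * u) (nhds 0) (nhds (τ - 0 * u)) :=
          (continuous_const.sub (continuous_id.mul continuous_const)).tendsto 0
        simpa using this.mono_left nhdsWithin_le_nhds
      have hev : ∀ᶠ t in nhdsWithin (0:ℝ) (Set.Ioi 0), g₀ (τ - t * u) ≤ g₀ τ :=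
        hT.eventually hmax
      have hmap : Tendsto (fun t : ℝ => ((x₀ - t • (u • h), t) :
            EuclideanSpace ℝ (Fin n) × ℝ))
          (nhdsWithin 0 (Set.Ioi 0)) (LL x₀) := by
        refine Tendsto.prodMk ?_ tendsto_id
        have : Tendsto (fun t : ℝ => x₀ - t • (u • h)) (nhds 0) (nhds (x₀ - (0:ℝ) • (u • h))) :=
          (continuous_const.sub (continuous_id.smul continuous_const)).tendsto 0
        simpa using this.mono_left nhdsWithin_le_nhds
      refine freq_le_clarke hε hLip (hmap.frequently (Filter.Eventually.frequently ?_))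
      filter_upwards [hev, self_mem_nhdsWithin] with t ht htpos
      have htpos' : (0:ℝ) < t := htpos
      have harg : x₀ - t • (u • h) = a + (τ - t * u) • h := by
        rw [hx₀, smul_smul, sub_smul]; abel
      have hnum : t * (u * s) ≤ f x₀ - f (x₀ - t • (u • h)) := by
        have hdiff : g₀ τ - g₀ (τ - t * u) = f x₀ - f (x₀ - t • (u • h)) - t * (u * s) := by
          rw [harg]; simp only [hg₀, hx₀]
          ring
        nlinarith [ht]
      rw [Q]
      simp only [sub_add_cancel]
      rw [le_div_iff₀ htpos']
      linarith [hnum]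
  have hs1 : s ≤ clarkeDeriv f x₀ h := by simpa using key 1
  have hs2 : -s ≤ clarkeDeriv f x₀ (-h) := by
    have := key (-1)
    rw [neg_one_smul] at this
    linarith [this]
  have H : ∀ c : ℝ, c • h = 0 → c • s = 0 := by
    intro c hc
    rcases smul_eq_zero.1 hc with hc0 | hh0
    · rw [hc0, zero_smul]
    · have hba : b = a := by rw [hh] at hh0; rwa [sub_eq_zero] at hh0
      rw [hs, hba, sub_self, smul_zero]
  set φ := LinearPMap.mkSpanSingleton' (σ := RingHom.id ℝ) h s H with hφdef
  have hφ : ∀ z : φ.domain, φ z ≤ clarkeDeriv f x₀ (z : EuclideanSpace ℝ (Fin n)) := by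
    rintro ⟨z, hz⟩
    obtain ⟨c, hc⟩ := Submodule.mem_span_singleton.1 hz
    subst hc
    have happ : φ ⟨c • h, hz⟩ = c • s := LinearPMap.mkSpanSingleton'_apply h s H c hz
    rw [happ, smul_eq_mul]
    show c * s ≤ clarkeDeriv f x₀ (c • h)
    rcases lt_trichotomy c 0 with hcneg | hc0 | hcpos
    · have he : c * s = (-c) * (-s) := by ring
      rw [he]
      have h1 : (-c) * (-s) ≤ (-c) * clarkeDeriv f x₀ (-h) :=
        mul_le_mul_of_nonneg_left hs2 (by linarith)
      refine h1.trans ?_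
      rw [← clarke_smul hε hLip (by linarith : (0:ℝ) < -c) (-h), smul_neg, neg_smul, neg_neg]
    · rw [hc0, zero_mul, zero_smul, clarke_zero]
    · calc c * s ≤ c * clarkeDeriv f x₀ h := mul_le_mul_of_nonneg_left hs1 hcpos.le
        _ = clarkeDeriv f x₀ (c • h) := (clarke_smul hε hLip hcpos h).symm
  obtain ⟨g, hg_eq, hg_le⟩ := exists_extension_of_le_sublinear φ (clarkeDeriv f x₀)
    (fun c hc x => clarke_smul hε hLip hc x) (clarke_add hε hLip) hφ
  refine ⟨τ, hτ, LinearMap.toContinuousLinearMap g, ?_, ?_⟩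
  · intro v
    simpa using hg_le v
  · have hmem : h ∈ φ.domain := Submodule.mem_span_singleton_self h
    have happ : φ ⟨h, hmem⟩ = s := LinearPMap.mkSpanSingleton'_apply_self h s H hmem
    have hgh : g h = s := (hg_eq ⟨h, hmem⟩).trans happ
    simpa using hgh.symm
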